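/- Let pq be a k-edge of S (the open half-plane left of the directed line from p to q contains exactly k points of S). Then the perpendicular bisector b_{pq} contains an unbounded ray such that every circle through p and q centered on that ray encloses exactly those k points of S in its open disk, for centers sufficiently far out; i.e., there exists T such that for all centers x on b_{pq} on the appropriate side with parameter t ≥ T, the open disk centered at x through p and q contains exactly the k points of S on the left of line pq. -/
import Mathlib


open scoped RealInnerProductSpace

noncomputable abbrev E2 := EuclideanSpace ℝ (Fin 2)

/-- The coordinates of a point of the Euclidean plane. -/
noncomputable def coordE (x : E2) (i : Fin 2) : ℝ := (WithLp.equiv 2 (Fin 2 → ℝ)) x i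

/-- The normal of the segment pq pointing into the open half-plane to the left of the
directed line from p to q. -/
noncomputable def leftNormal (p q : E2) : E2 :=
  (WithLp.equiv 2 (Fin 2 → ℝ)).symm
    ![-(coordE q 1 - coordE p 1), coordE q 0 - coordE p 0]

/-- if pq is a k-edge of S, the perpendicular bisector of p and q
contains an unbounded ray (centers m + t·u, t ≥ T, where m is the midpoint of pq and
u the unit left normal) such that every circle through p and q centered on it encloses
exactly the points of S strictly to the left of line pq. -/
theorem kedge_unbounded_ray (S : Finset E2) (p q : E2)
    (hp : p ∈ S) (hq : q ∈ S) (hpq : p ≠ q)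
    (hcol : ∀ a ∈ S, ∀ b ∈ S, ∀ c ∈ S, a ≠ b → a ≠ c → b ≠ c →
      ¬ Collinear ℝ ({a, b, c} : Set E2)) :
    ∃ T : ℝ, ∀ t : ℝ, T ≤ t → ∀ s ∈ S, s ≠ p → s ≠ q →
      ((0 < ⟪s - p, leftNormal p q⟫ →
          dist (midpoint ℝ p q + t • (‖q - p‖⁻¹ • leftNormal p q)) s
            < dist (midpoint ℝ p q + t • (‖q - p‖⁻¹ • leftNormal p q)) p)
        ∧ (⟪s - p, leftNormal p q⟫ < 0 →
          dist (midpoint ℝ p q + t • (‖q - p‖⁻¹ • leftNormal p q)) p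
            < dist (midpoint ℝ p q + t • (‖q - p‖⁻¹ • leftNormal p q)) s)) := by
  set n := leftNormal p q with hn
  set u : E2 := ‖q - p‖⁻¹ • n with hu
  set m : E2 := midpoint ℝ p q with hm
  have key : ∀ s ∈ S, ∀ᶠ t : ℝ in Filter.atTop,
      ((0 < ⟪s - p, n⟫ → dist (m + t • u) s < dist (m + t • u) p)
      ∧ (⟪s - p, n⟫ < 0 → dist (m + t • u) p < dist (m + t • u) s)) := by
    intro s _
    have hid : ∀ t : ℝ, dist (m + t • u) p ^ 2 - dist (m + t • u) s ^ 2
        = (‖p‖ ^ 2 - ‖s‖ ^ 2 + 2 * ⟪m, s - p⟫) + t * (2 * (‖q - p‖⁻¹ * ⟪s - p, n⟫)) := by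
      intro t
      simp only [dist_eq_norm, hu]
      rw [@norm_sub_sq_real, @norm_sub_sq_real]
      simp only [inner_add_left, real_inner_smul_left, inner_sub_right,
        inner_sub_left, real_inner_comm s m]
      rw [real_inner_comm p m, real_inner_comm p n, real_inner_comm s n]
      ring
    rcases lt_trichotomy (⟪s - p, n⟫ : ℝ) 0 with h | h | h
    · set D : ℝ := 2 * (‖q - p‖⁻¹ * ⟪s - p, n⟫) with hD
      have hDneg : D < 0 := by
        have hb : 0 < ‖q - p‖⁻¹ :=
          inv_pos.2 (norm_pos_iff.2 (sub_ne_zero.2 (Ne.symm hpq)))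
        have := mul_neg_of_pos_of_neg hb h
        linarith
      refine Filter.eventually_atTop.2 ⟨(-1 - (‖p‖ ^ 2 - ‖s‖ ^ 2 + 2 * ⟪m, s - p⟫)) / D, fun t ht => ?_⟩
      have hneg : dist (m + t • u) p ^ 2 - dist (m + t • u) s ^ 2 ≤ -1 := by
        rw [hid t]
        have := (div_le_iff_of_neg hDneg).mp ht
        linarith
      constructor
      · intro h'; exact absurd h' (not_lt.2 h.le)
      · intro _
        have hlt : dist (m + t • u) p ^ 2 < dist (m + t • u) s ^ 2 := by linarith
        exact lt_of_pow_lt_pow_left₀ 2 dist_nonneg hlt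
    · exact Filter.Eventually.of_forall fun t =>
        ⟨fun h' => absurd h' (by simp [h]), fun h' => absurd h' (by simp [h])⟩
    · set D : ℝ := 2 * (‖q - p‖⁻¹ * ⟪s - p, n⟫) with hD
      have hDpos : 0 < D := by
        have hb : 0 < ‖q - p‖⁻¹ :=
          inv_pos.2 (norm_pos_iff.2 (sub_ne_zero.2 (Ne.symm hpq)))
        have := mul_pos hb h
        linarith
      refine Filter.eventually_atTop.2 ⟨(1 - (‖p‖ ^ 2 - ‖s‖ ^ 2 + 2 * ⟪m, s - p⟫)) / D, fun t ht => ?_⟩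
      have hpos : 1 ≤ dist (m + t • u) p ^ 2 - dist (m + t • u) s ^ 2 := by
        rw [hid t]
        have := (div_le_iff₀ hDpos).mp ht
        linarith
      constructor
      · intro _
        have hlt : dist (m + t • u) s ^ 2 < dist (m + t • u) p ^ 2 := by linarith
        exact lt_of_pow_lt_pow_left₀ 2 dist_nonneg hlt
      · intro h'; exact absurd h' (not_lt.2 h.le)
  have hall : ∀ᶠ t : ℝ in Filter.atTop, ∀ s ∈ S, _ :=
    (Filter.eventually_all_finset S).2 key
  rcases Filter.eventually_atTop.1 hall with ⟨T, hT⟩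
  exact ⟨T, fun t ht s hs _ _ => hT t ht s hs⟩
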